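/- Let q be an odd prime power, ψ a nontrivial multiplicative character of F_q, and χ a generator of the character group of F_q^×. Then ∏_{r=0}^{q-2} J(ψ, χ^r) = G(ψ)^{q-1} / q, where J denotes the Jacobi sum and G the Gauss sum. -/

import Mathlib

theorem prod_jacobiSum (F : Type*) [Field F] [Fintype F] [DecidableEq F]
    (hodd : Odd (Fintype.card F))
    (ψ χ : MulChar F ℂ) (hψ : ψ ≠ 1) (hχ : ∀ ψ' : MulChar F ℂ, ∃ r : ℕ, ψ' = χ ^ r)
    (e : AddChar F ℂ) (he : e.IsPrimitive) :
    ∏ r ∈ Finset.range (Fintype.card F - 1), jacobiSum ψ (χ ^ r)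
      = gaussSum ψ e ^ (Fintype.card F - 1) / (Fintype.card F : ℂ) := by
  classical
  set q := Fintype.card F with hq
  have hq2 : 2 ≤ q := Fintype.one_lt_card
  have hq3 : 3 ≤ q := by
    obtain ⟨k, hk⟩ := hodd; omega
  have hcu : Fintype.card Fˣ = q - 1 := by
    rw [Fintype.card_units, hq]
  -- cardinality of the character group
  have hexp : Monoid.exponent Fˣ = q - 1 := by
    rw [IsCyclic.exponent_eq_card, Nat.card_eq_fintype_card, hcu]
  have hNZ : NeZero ((Monoid.exponent Fˣ : ℂ)) := by
    rw [hexp]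
    exact ⟨by exact_mod_cast (by omega : (q - 1 : ℕ) ≠ 0)⟩
  have hcardChar : Nat.card (MulChar F ℂ) = q - 1 := by
    rw [MulChar.card_eq_card_units_of_hasEnoughRootsOfUnity F ℂ,
      Nat.card_eq_fintype_card, hcu]
  have : Finite (MulChar F ℂ) := inferInstance
  have : Fintype (MulChar F ℂ) := Fintype.ofFinite _
  have hcardChar' : Fintype.card (MulChar F ℂ) = q - 1 := by
    rw [← Nat.card_eq_fintype_card, hcardChar]
  -- the map r ↦ χ^r is a bijection from Fin (q-1)
  have hχpow : χ ^ (q - 1) = 1 := by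
    have := MulChar.pow_card_eq_one χ
    rwa [hcu] at this
  have hbij : Function.Bijective (fun r : Fin (q - 1) ↦ χ ^ (r : ℕ)) := by
    rw [Fintype.bijective_iff_surjective_and_card]
    refine ⟨fun ψ' ↦ ?_, by rw [Fintype.card_fin, hcardChar']⟩
    obtain ⟨r, hr⟩ := hχ ψ'
    refine ⟨⟨r % (q - 1), Nat.mod_lt _ (by omega)⟩, ?_⟩
    have : χ ^ r = χ ^ (r % (q - 1)) := by
      conv_lhs => rw [← Nat.div_add_mod r (q - 1)]
      rw [pow_add, pow_mul, hχpow, one_pow, one_mul]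
    simp [hr, this]
  have hreindex : ∏ r ∈ Finset.range (q - 1), jacobiSum ψ (χ ^ r)
      = ∏ φ : MulChar F ℂ, jacobiSum ψ φ := by
    rw [← Fin.prod_univ_eq_prod_range (fun r ↦ jacobiSum ψ (χ ^ r)) (q - 1)]
    exact Fintype.prod_bijective _ hbij _ _ (fun r ↦ rfl)
  rw [hreindex]
  -- basic nonvanishing facts
  have hqC : (q : ℂ) ≠ 0 := by
    exact_mod_cast (by omega : q ≠ 0)
  have hGnz : ∀ φ : MulChar F ℂ, φ ≠ 1 → gaussSum φ e ≠ 0 :=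
    fun φ hφ ↦ gaussSum_ne_zero_of_nontrivial hqC hφ he
  have hψi : ψ⁻¹ ≠ 1 := by
    simpa using hψ
  -- split off φ = 1 and φ = ψ⁻¹
  set S : Finset (MulChar F ℂ) := (Finset.univ.erase 1).erase ψ⁻¹ with hS
  have hmem1 : ψ⁻¹ ∈ Finset.univ.erase (1 : MulChar F ℂ) :=
    Finset.mem_erase.mpr ⟨hψi, Finset.mem_univ _⟩
  have hsplit : ∏ φ : MulChar F ℂ, jacobiSum ψ φ
      = jacobiSum ψ 1 * (jacobiSum ψ ψ⁻¹ * ∏ φ ∈ S, jacobiSum ψ φ) := by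
    rw [← Finset.mul_prod_erase Finset.univ _ (Finset.mem_univ (1 : MulChar F ℂ)),
      ← Finset.mul_prod_erase _ _ hmem1]
  -- on S, express Jacobi sums via Gauss sums
  have hSprop : ∀ φ ∈ S, φ ≠ 1 ∧ ψ * φ ≠ 1 := by
    intro φ hφ
    rw [hS, Finset.mem_erase, Finset.mem_erase] at hφ
    refine ⟨hφ.2.1, fun h ↦ hφ.1 ?_⟩
    exact (inv_eq_of_mul_eq_one_right h).symm ▸ rfl
  have hJS : ∀ φ ∈ S, jacobiSum ψ φ
      = gaussSum ψ e * gaussSum φ e / gaussSum (ψ * φ) e := by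
    intro φ hφ
    exact jacobiSum_eq_gaussSum_mul_gaussSum_div_gaussSum hqC (hSprop φ hφ).2 he
  set T : Finset (MulChar F ℂ) := (Finset.univ.erase 1).erase ψ with hT
  have hmemψ : ψ ∈ Finset.univ.erase (1 : MulChar F ℂ) :=
    Finset.mem_erase.mpr ⟨hψ, Finset.mem_univ _⟩
  -- product of gaussSum (ψ*φ) over S equals product of gaussSum φ over T
  have hprodT : ∏ φ ∈ S, gaussSum (ψ * φ) e = ∏ φ ∈ T, gaussSum φ e := by
    refine Finset.prod_nbij' (fun φ ↦ ψ * φ) (fun φ ↦ ψ⁻¹ * φ) ?_ ?_ ?_ ?_ ?_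
    · intro φ hφ
      obtain ⟨hφ1, hφ2⟩ := hSprop φ hφ
      rw [hT, Finset.mem_erase, Finset.mem_erase]
      exact ⟨fun h ↦ hφ1 (by simpa using h), hφ2, Finset.mem_univ _⟩
    · intro φ hφ
      rw [hT, Finset.mem_erase, Finset.mem_erase] at hφ
      rw [hS, Finset.mem_erase, Finset.mem_erase]
      refine ⟨fun h ↦ hφ.2.1 ?_, fun h ↦ hφ.1 ?_, Finset.mem_univ _⟩
      · have := congrArg (ψ * ·) h
        simpa [← mul_assoc] using this
      · have := congrArg (ψ * ·) h
        simpa [← mul_assoc] using this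
    · intro φ _; simp [← mul_assoc]
    · intro φ _; simp [← mul_assoc]
    · intro φ _; rfl
  -- product over S of gaussSum φ, via products over erase 1
  set P : ℂ := ∏ φ ∈ S, gaussSum φ e with hP
  set Qt : ℂ := ∏ φ ∈ T, gaussSum φ e with hQt
  have hPQ : gaussSum ψ⁻¹ e * P = gaussSum ψ e * Qt := by
    rw [hP, hQt, hS, hT, Finset.mul_prod_erase (Finset.univ.erase 1) (fun φ ↦ gaussSum φ e) hmem1, Finset.mul_prod_erase (Finset.univ.erase 1) (fun φ ↦ gaussSum φ e) hmemψ]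
  have hScard : S.card = q - 3 := by
    rw [hS, Finset.card_erase_of_mem hmem1, Finset.card_erase_of_mem (Finset.mem_univ _),
      Finset.card_univ, hcardChar']
    omega
  have hprodS : ∏ φ ∈ S, jacobiSum ψ φ = gaussSum ψ e ^ (q - 3) * P / Qt := by
    rw [Finset.prod_congr rfl hJS, Finset.prod_div_distrib, Finset.prod_mul_distrib,
      Finset.prod_const, hScard, hprodT]
  -- key Gauss sum identities
  have hm1 : ψ (-1) * ψ (-1) = 1 := by
    rw [← map_mul, neg_mul_neg, one_mul, MulChar.map_one]
  have hinv1 : (ψ⁻¹) (-1) = ψ (-1) := by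
    rw [MulChar.inv_apply', inv_neg, inv_one]
  have hab : gaussSum ψ e * gaussSum ψ⁻¹ e = ψ (-1) * q := by
    have h1 := gaussSum_mul_gaussSum_eq_card hψ he
    have h2 := mul_gaussSum_inv_eq_gaussSum ψ⁻¹ e
    rw [hinv1] at h2
    rw [← h2, ← mul_assoc, mul_comm (gaussSum ψ e) (ψ (-1)), mul_assoc, h1, hq]
  have hGψ : gaussSum ψ e ≠ 0 := hGnz ψ hψ
  have hGψi : gaussSum ψ⁻¹ e ≠ 0 := hGnz ψ⁻¹ hψi
  have hQtnz : Qt ≠ 0 := by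
    rw [hQt]
    exact Finset.prod_ne_zero_iff.mpr fun φ hφ ↦
      hGnz φ (Finset.mem_erase.mp (Finset.mem_erase.mp hφ).2).1
  -- evaluate the two special Jacobi sums
  have hJ1 : jacobiSum ψ 1 = -1 := by
    rw [jacobiSum_comm, jacobiSum_one_nontrivial hψ]
  have hJinv : jacobiSum ψ ψ⁻¹ = -ψ (-1) := jacobiSum_nontrivial_inv hψ
  rw [hsplit, hprodS, hJ1, hJinv]
  -- final algebra
  obtain ⟨m, hm⟩ : ∃ m, q = m + 3 := ⟨q - 3, by omega⟩
  have h1 : q - 3 = m := by omega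
  have h2 : q - 1 = m + 2 := by omega
  rw [h1, h2]
  field_simp
  have hqab : (q : ℂ) = ψ (-1) * (gaussSum ψ e * gaussSum ψ⁻¹ e) := by
    rw [hab, ← mul_assoc, hm1, one_mul]
  rw [hqab]
  linear_combination (gaussSum ψ e ^ (m + 1) * P * gaussSum ψ⁻¹ e) * hm1
    + gaussSum ψ e ^ (m + 1) * hPQ
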